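/- For any two positive semidefinite matrices A_1 = Σ_k λ_{1k} Q_{1k} and A_2 = Σ_ℓ λ_{2ℓ} Q_{2ℓ} (spectral decompositions), and any s ∈ [0,1], Σ_{k,ℓ} min{λ_{1k}, λ_{2ℓ}} · tr(Q_{1k} Q_{2ℓ}) ≤ tr(A_1^s A_2^{1−s}). -/

import Mathlib

open Matrix
open scoped ComplexOrder Classical
open Polynomial

/-- Matrix real power `A ^ s` via functional calculus, with the convention `0 ^ 0 = 0`
(so that `A ^ s` has the same support as `A`). -/
noncomputable def mpow {d : ℕ} {A : Matrix (Fin d) (Fin d) ℂ} (hA : A.IsHermitian) (s : ℝ) :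
    Matrix (Fin d) (Fin d) ℂ :=
  (hA.eigenvectorUnitary : Matrix (Fin d) (Fin d) ℂ) *
    Matrix.diagonal (fun i =>
      ((if hA.eigenvalues i = 0 then (0 : ℝ) else (hA.eigenvalues i) ^ s : ℝ) : ℂ)) *
    (star hA.eigenvectorUnitary : Matrix (Fin d) (Fin d) ℂ)

set_option linter.unusedVariables false

section aux
variable {d : ℕ}

lemma pow_spectral {ι : Type*} [Fintype ι] (a : ι → ℂ)
    (Q : ι → Matrix (Fin d) (Fin d) ℂ)
    (hidem : ∀ k, Q k * Q k = Q k)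
    (horth : ∀ k k', k ≠ k' → Q k * Q k' = 0) (hsum : ∑ k, Q k = 1) (n : ℕ) :
    (∑ k, a k • Q k) ^ n = ∑ k, (a k ^ n) • Q k := by
  induction n with
  | zero => simpa using hsum.symm
  | succ n ih =>
    rw [pow_succ, ih, Finset.sum_mul_sum]
    refine Finset.sum_congr rfl fun k _ => ?_
    rw [Finset.sum_eq_single k]
    · rw [smul_mul_smul_comm, hidem, ← pow_succ]
    · intro l _ hlk
      rw [smul_mul_smul_comm, horth k l (Ne.symm hlk), smul_zero]
    · simp

lemma aeval_spectral {ι : Type*} [Fintype ι] (a : ι → ℂ)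
    (Q : ι → Matrix (Fin d) (Fin d) ℂ)
    (hidem : ∀ k, Q k * Q k = Q k)
    (horth : ∀ k k', k ≠ k' → Q k * Q k' = 0) (hsum : ∑ k, Q k = 1)
    (q : ℂ[X]) :
    aeval (∑ k, a k • Q k) q = ∑ k, (q.eval (a k)) • Q k := by
  induction q using Polynomial.induction_on' with
  | add p q hp hq => simp [hp, hq, add_smul, Finset.sum_add_distrib]
  | monomial n c =>
    rw [aeval_monomial, pow_spectral a Q hidem horth hsum n, ← Algebra.smul_def,
      Finset.smul_sum]
    simp [smul_smul, eval_monomial]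

lemma conj_pow' (U D : Matrix (Fin d) (Fin d) ℂ) (h1 : star U * U = 1)
    (h2 : U * star U = 1) (n : ℕ) :
    (U * D * star U) ^ n = U * D ^ n * star U := by
  induction n with
  | zero => simpa using h2.symm
  | succ n ih =>
    rw [pow_succ, ih, pow_succ]
    calc U * D ^ n * star U * (U * D * star U)
        = U * D ^ n * (star U * U) * D * star U := by noncomm_ring
      _ = U * (D ^ n * D) * star U := by rw [h1]; noncomm_ring

lemma aeval_unitary_diag (U : Matrix (Fin d) (Fin d) ℂ)
    (hU : U ∈ Matrix.unitaryGroup (Fin d) ℂ) (v : Fin d → ℂ) (q : ℂ[X]) :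
    aeval (U * diagonal v * star U) q = U * diagonal (fun i => q.eval (v i)) * star U := by
  have h1 : star U * U = 1 := mem_unitaryGroup_iff'.mp hU
  have h2 : U * star U = 1 := mem_unitaryGroup_iff.mp hU
  induction q using Polynomial.induction_on' with
  | add p q hp hq =>
    rw [map_add, hp, hq]
    simp only [eval_add]
    rw [show (Matrix.diagonal fun i => p.eval (v i) + q.eval (v i)) =
      Matrix.diagonal (fun i => p.eval (v i)) + Matrix.diagonal (fun i => q.eval (v i)) from
      (diagonal_add _ _).symm]
    noncomm_ring
  | monomial n c =>
    rw [aeval_monomial, conj_pow' U _ h1 h2, ← Algebra.smul_def, diagonal_pow]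
    rw [show (Matrix.diagonal fun i => ((monomial n c).eval (v i))) =
      c • Matrix.diagonal (v ^ n) by
        rw [← diagonal_smul]
        exact congrArg _ (funext fun i => by
          simp [eval_monomial, Pi.smul_apply, Pi.pow_apply, smul_eq_mul])]
    simp [Matrix.mul_smul, Matrix.smul_mul]

lemma mpow_eq_sum {ι : Type*} [Fintype ι] {A : Matrix (Fin d) (Fin d) ℂ}
    (hA : A.IsHermitian) (lam : ι → ℝ) (Q : ι → Matrix (Fin d) (Fin d) ℂ)
    (hidem : ∀ k, Q k * Q k = Q k)
    (horth : ∀ k k', k ≠ k' → Q k * Q k' = 0) (hsum : ∑ k, Q k = 1)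
    (hspec : A = ∑ k, ((lam k : ℂ) • Q k)) (t : ℝ) :
    mpow hA t = ∑ k, (((if lam k = 0 then (0:ℝ) else lam k ^ t : ℝ)) : ℂ) • Q k := by
  classical
  set f : ℝ → ℝ := fun x => if x = 0 then 0 else x ^ t with hf
  set S : Finset ℝ := Finset.univ.image hA.eigenvalues ∪ Finset.univ.image lam with hS
  set p : ℝ[X] := Lagrange.interpolate S id f with hpdef
  have hp : ∀ x ∈ S, p.eval x = f x := fun x hx =>
    Lagrange.eval_interpolate_at_node f (Set.injOn_id _) hx
  set q : ℂ[X] := p.map (algebraMap ℝ ℂ) with hqdef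
  have hq : ∀ x ∈ S, q.eval (x : ℂ) = ((f x : ℝ) : ℂ) := by
    intro x hx
    rw [hqdef, eval_map, show ((x : ℂ)) = algebraMap ℝ ℂ x from rfl,
      eval₂_at_apply, hp x hx]
    rfl
  have h1 : aeval A q = mpow hA t := by
    conv_lhs => rw [hA.spectral_theorem, Unitary.conjStarAlgAut_apply]
    rw [aeval_unitary_diag _ (hA.eigenvectorUnitary).2 _ q]
    unfold mpow
    have hd : (fun i => q.eval ((RCLike.ofReal ∘ hA.eigenvalues) i)) =
        fun i => (((if hA.eigenvalues i = 0 then (0:ℝ) else hA.eigenvalues i ^ t : ℝ)) : ℂ) := by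
      funext i
      exact hq _ (Finset.mem_union_left _ (Finset.mem_image_of_mem _ (Finset.mem_univ i)))
    rw [hd]
  have h2 : aeval A q = ∑ k, (((f (lam k) : ℝ)) : ℂ) • Q k := by
    rw [hspec, aeval_spectral _ _ hidem horth hsum]
    exact Finset.sum_congr rfl fun k _ => by
      rw [hq _ (Finset.mem_union_right _ (Finset.mem_image_of_mem _ (Finset.mem_univ k)))]
  rw [← h1, h2]

lemma trace_proj_nonneg (P R : Matrix (Fin d) (Fin d) ℂ)
    (hP : P.IsHermitian) (hPi : P * P = P) (hR : R.IsHermitian) (hRi : R * R = R) :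
    0 ≤ (Matrix.trace (P * R)).re := by
  have key : Matrix.trace ((R * P)ᴴ * (R * P)) = Matrix.trace (P * R) := by
    rw [conjTranspose_mul, hP.eq, hR.eq,
      show P * R * (R * P) = P * R * R * P by noncomm_ring,
      Matrix.trace_mul_comm,
      show P * (P * R * R) = P * P * (R * R) by noncomm_ring, hPi, hRi]
  rw [← key, Matrix.trace, Complex.re_sum]
  refine Finset.sum_nonneg fun i _ => ?_
  rw [Matrix.diag_apply, Matrix.mul_apply, Complex.re_sum]
  refine Finset.sum_nonneg fun j _ => ?_
  rw [Matrix.conjTranspose_apply]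
  have : (star ((R * P) j i) * (R * P) j i).re =
      ((R * P) j i).re ^ 2 + ((R * P) j i).im ^ 2 := by
    simp [Complex.mul_re, Complex.star_def, pow_two]
  rw [this]
  positivity

lemma min_le_pow_mul (a b s : ℝ) (ha : 0 ≤ a) (hb : 0 ≤ b) (hs0 : 0 ≤ s) (hs1 : s ≤ 1) :
    min a b ≤ (if a = 0 then 0 else a ^ s) * (if b = 0 then 0 else b ^ (1 - s)) := by
  rcases eq_or_lt_of_le ha with h | hapos
  · simp [← h, min_eq_left hb]
  rcases eq_or_lt_of_le hb with h | hbpos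
  · simp [← h, min_eq_right ha]
  rw [if_neg (ne_of_gt hapos), if_neg (ne_of_gt hbpos)]
  have hm : 0 < min a b := lt_min hapos hbpos
  have : min a b = (min a b) ^ s * (min a b) ^ (1 - s) := by
    rw [← Real.rpow_add hm]; simp
  rw [this]
  exact mul_le_mul (Real.rpow_le_rpow hm.le (min_le_left a b) hs0)
    (Real.rpow_le_rpow hm.le (min_le_right a b) (by linarith))
    (Real.rpow_nonneg hm.le _) (Real.rpow_nonneg ha _)

end aux

/-- Equation (6): `Σ_{k,ℓ} min{λ_{1k}, λ_{2ℓ}} tr(Q_{1k} Q_{2ℓ}) ≤ tr(A₁^s A₂^{1−s})`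
for any `s ∈ [0,1]`. -/
theorem min_sum_le_trace_power {d : ℕ} {ι₁ ι₂ : Type*} [Fintype ι₁] [Fintype ι₂]
    (A1 A2 : Matrix (Fin d) (Fin d) ℂ) (hA1 : A1.PosSemidef) (hA2 : A2.PosSemidef)
    (lam1 : ι₁ → ℝ) (lam2 : ι₂ → ℝ)
    (Q1 : ι₁ → Matrix (Fin d) (Fin d) ℂ) (Q2 : ι₂ → Matrix (Fin d) (Fin d) ℂ)
    (hQ1herm : ∀ k, (Q1 k).IsHermitian) (hQ1idem : ∀ k, Q1 k * Q1 k = Q1 k)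
    (hQ1orth : ∀ k k', k ≠ k' → Q1 k * Q1 k' = 0) (hQ1sum : ∑ k, Q1 k = 1)
    (hQ2herm : ∀ l, (Q2 l).IsHermitian) (hQ2idem : ∀ l, Q2 l * Q2 l = Q2 l)
    (hQ2orth : ∀ l l', l ≠ l' → Q2 l * Q2 l' = 0) (hQ2sum : ∑ l, Q2 l = 1)
    (hlam1 : ∀ k, 0 ≤ lam1 k) (hlam2 : ∀ l, 0 ≤ lam2 l)
    (hlam1inj : Function.Injective lam1) (hlam2inj : Function.Injective lam2)
    (hspec1 : A1 = ∑ k, ((lam1 k : ℂ) • Q1 k)) (hspec2 : A2 = ∑ l, ((lam2 l : ℂ) • Q2 l))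
    (s : ℝ) (hs : s ∈ Set.Icc (0 : ℝ) 1) :
    ∑ k, ∑ l, min (lam1 k) (lam2 l) * (Matrix.trace (Q1 k * Q2 l)).re ≤
      (Matrix.trace (mpow hA1.1 s * mpow hA2.1 (1 - s))).re := by
  classical
  set g1 : ι₁ → ℝ := fun k => if lam1 k = 0 then 0 else lam1 k ^ s with hg1
  set g2 : ι₂ → ℝ := fun l => if lam2 l = 0 then 0 else lam2 l ^ (1 - s) with hg2
  have e1 : mpow hA1.1 s = ∑ k, ((g1 k : ℂ)) • Q1 k :=
    mpow_eq_sum hA1.1 lam1 Q1 hQ1idem hQ1orth hQ1sum hspec1 s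
  have e2 : mpow hA2.1 (1 - s) = ∑ l, ((g2 l : ℂ)) • Q2 l :=
    mpow_eq_sum hA2.1 lam2 Q2 hQ2idem hQ2orth hQ2sum hspec2 (1 - s)
  have etr : (Matrix.trace (mpow hA1.1 s * mpow hA2.1 (1 - s))).re =
      ∑ k, ∑ l, g1 k * g2 l * (Matrix.trace (Q1 k * Q2 l)).re := by
    rw [e1, e2, Finset.sum_mul_sum]
    rw [Matrix.trace_sum]
    rw [Complex.re_sum]
    refine Finset.sum_congr rfl fun k _ => ?_
    rw [Matrix.trace_sum, Complex.re_sum]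
    refine Finset.sum_congr rfl fun l _ => ?_
    rw [smul_mul_smul_comm, Matrix.trace_smul, smul_eq_mul,
      show ((g1 k : ℂ)) * (g2 l : ℂ) * Matrix.trace (Q1 k * Q2 l) =
        ((g1 k * g2 l : ℝ) : ℂ) * Matrix.trace (Q1 k * Q2 l) by push_cast; ring,
      Complex.re_ofReal_mul]
  rw [etr]
  refine Finset.sum_le_sum fun k _ => Finset.sum_le_sum fun l _ => ?_
  exact mul_le_mul_of_nonneg_right
    (min_le_pow_mul _ _ _ (hlam1 k) (hlam2 l) hs.1 hs.2)
    (trace_proj_nonneg _ _ (hQ1herm k) (hQ1idem k) (hQ2herm l) (hQ2idem l))
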